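/- arXiv:1011.2536 — 8 statements merged into one kernel-verified Lean document; each statement's English description precedes it below -/
import Mathlib

section
/- Let U be an open subset of ℝⁿ, S : U → ℝ a C¹ function whose gradient has no zeros on U, and u : U → ℂ continuous. Then the limit as α → 0⁺ of Re(u(x)·exp(i·S(x)/α)) exists for all x in U if and only if u(x) = 0 for all x in U. -/
open Filter

lemma keyθ (c : ℂ) (s : ℝ) (hs : 0 < s) (L : ℝ)
    (h : Tendsto (fun α : ℝ => (c * Complex.exp (Complex.I * (s : ℂ) / (α : ℂ))).re)
      (nhdsWithin 0 (Set.Ioi 0)) (nhds L)) (θ : ℝ) :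
    (c * Complex.exp (Complex.I * θ)).re = L := by
  set a : ℕ → ℝ := fun k => s / (θ + 2 * Real.pi * k) with ha
  have hden : Tendsto (fun k : ℕ => θ + 2 * Real.pi * k) atTop atTop := by
    apply tendsto_atTop_add_const_left
    exact (tendsto_natCast_atTop_atTop (R := ℝ)).const_mul_atTop (by positivity)
  have hpos : ∀ᶠ k : ℕ in atTop, 0 < θ + 2 * Real.pi * k := hden.eventually_gt_atTop 0
  have h0 : Tendsto a atTop (nhds 0) := tendsto_const_nhds.div_atTop hden
  have ha' : Tendsto a atTop (nhdsWithin 0 (Set.Ioi 0)) := by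
    refine tendsto_nhdsWithin_of_tendsto_nhds_of_eventually_within _ h0 ?_
    filter_upwards [hpos] with k hk
    exact div_pos hs hk
  have hcomp := h.comp ha'
  have hev : ∀ᶠ k : ℕ in atTop,
      ((fun α : ℝ => (c * Complex.exp (Complex.I * (s : ℂ) / (α : ℂ))).re) ∘ a) k
        = (c * Complex.exp (Complex.I * θ)).re := by
    filter_upwards [hpos] with k hk
    have hak : a k ≠ 0 := (div_pos hs hk).ne'
    have : (Complex.I * (s : ℂ) / ((a k : ℝ) : ℂ)) = Complex.I * ((θ : ℂ) + 2 * Real.pi * k) := by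
      have hsC : (s:ℂ) ≠ 0 := by exact_mod_cast hs.ne'
      have hkC : ((θ:ℝ) + 2*Real.pi*(k:ℝ)) ≠ 0 := hk.ne'
      have hkC' : ((θ:ℂ) + 2*(Real.pi:ℂ)*(k:ℂ)) ≠ 0 := by exact_mod_cast hkC
      rw [ha]
      push_cast
      field_simp
    simp only [Function.comp_apply, this]
    congr 2
    rw [mul_add, Complex.exp_add]
    have h1 : Complex.exp (Complex.I * (2 * Real.pi * k)) = 1 := by
      have := Complex.exp_int_mul_two_pi_mul_I (k : ℤ)
      rw [← this]
      congr 1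
      push_cast
      ring
    rw [h1, mul_one]
  have := (tendsto_congr' hev).mp hcomp
  exact tendsto_nhds_unique tendsto_const_nhds this

lemma keypos (c : ℂ) (s : ℝ) (hs : 0 < s) (L : ℝ)
    (h : Tendsto (fun α : ℝ => (c * Complex.exp (Complex.I * (s : ℂ) / (α : ℂ))).re)
      (nhdsWithin 0 (Set.Ioi 0)) (nhds L)) : c = 0 := by
  have h0 := keyθ c s hs L h 0
  have hpi := keyθ c s hs L h Real.pi
  have hpi2 := keyθ c s hs L h (Real.pi / 2)
  rw [show ((0:ℝ):ℂ) = 0 by norm_num, mul_zero, Complex.exp_zero, mul_one] at h0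
  rw [show Complex.I * (Real.pi:ℂ) = (Real.pi:ℂ) * Complex.I by ring,
    Complex.exp_pi_mul_I] at hpi
  have hexp : Complex.exp (Complex.I * ((Real.pi/2 : ℝ):ℂ)) = Complex.I := by
    rw [show Complex.I * ((Real.pi/2 : ℝ):ℂ) = ((Real.pi/2:ℝ):ℂ) * Complex.I by ring,
      Complex.exp_mul_I]
    push_cast
    rw [Complex.cos_pi_div_two, Complex.sin_pi_div_two]
    ring
  rw [hexp] at hpi2
  simp only [Complex.mul_re, Complex.neg_re, Complex.neg_im, Complex.one_re, Complex.one_im,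
    Complex.I_re, Complex.I_im] at hpi hpi2
  apply Complex.ext <;> simp <;> linarith

lemma keyne (c : ℂ) (s : ℝ) (hs : s ≠ 0) (L : ℝ)
    (h : Tendsto (fun α : ℝ => (c * Complex.exp (Complex.I * (s : ℂ) / (α : ℂ))).re)
      (nhdsWithin 0 (Set.Ioi 0)) (nhds L)) : c = 0 := by
  rcases hs.lt_or_gt with hneg | hpos
  · have heq : ∀ α : ℝ, (c * Complex.exp (Complex.I * (s : ℂ) / (α : ℂ))).re
        = ((starRingEnd ℂ) c * Complex.exp (Complex.I * ((-s : ℝ) : ℂ) / (α : ℂ))).re := by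
      intro α
      have : (starRingEnd ℂ) c * Complex.exp (Complex.I * ((-s : ℝ) : ℂ) / (α : ℂ))
          = (starRingEnd ℂ) (c * Complex.exp (Complex.I * (s : ℂ) / (α : ℂ))) := by
        rw [map_mul, ← Complex.exp_conj]
        congr 2
        rw [map_div₀, map_mul, Complex.conj_I, Complex.conj_ofReal, Complex.conj_ofReal]
        push_cast
        ring
      rw [this, Complex.conj_re]
    simp only [heq] at h
    have := keypos ((starRingEnd ℂ) c) (-s) (by linarith) L h
    simpa using congrArg (starRingEnd ℂ) this
  · exact keypos c s hpos L h

theorem stmt_0 {n : ℕ} (U : Set (Fin n → ℝ)) (hU : IsOpen U)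
    (S : (Fin n → ℝ) → ℝ) (hS : ContDiffOn ℝ 1 S U)
    (hgrad : ∀ x ∈ U, fderivWithin ℝ S U x ≠ 0)
    (u : (Fin n → ℝ) → ℂ) (hu : ContinuousOn u U) :
    (∀ x ∈ U, ∃ L : ℝ, Tendsto
        (fun α : ℝ => (u x * Complex.exp (Complex.I * (S x : ℂ) / (α : ℂ))).re)
        (nhdsWithin 0 (Set.Ioi 0)) (nhds L))
      ↔ ∀ x ∈ U, u x = 0 := by
  constructor
  · intro h
    have claim : ∀ y ∈ U, S y ≠ 0 → u y = 0 := by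
      intro y hy hSy
      obtain ⟨L, hL⟩ := h y hy
      exact keyne (u y) (S y) hSy L hL
    intro x hx
    by_cases hSx : S x ≠ 0
    · exact claim x hx hSx
    push_neg at hSx
    -- use the nonvanishing derivative to find nearby points with S ≠ 0
    have hdiff : DifferentiableAt ℝ S x :=
      ((hS.differentiableOn one_ne_zero) x hx).differentiableAt (hU.mem_nhds hx)
    have hDne : fderiv ℝ S x ≠ 0 := by
      rw [← fderivWithin_of_isOpen hU hx]
      exact hgrad x hx
    obtain ⟨v, hv⟩ : ∃ v, fderiv ℝ S x v ≠ 0 := by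
      by_contra hc
      push_neg at hc
      exact hDne (ContinuousLinearMap.ext fun w => by simp [hc w])
    set g : ℝ → ℝ := fun t => S (x + t • v) with hg
    have hline : HasDerivAt (fun t : ℝ => x + t • v) v 0 := by
      simpa using ((hasDerivAt_id (0:ℝ)).smul_const v).const_add x
    have hgd : HasDerivAt g (fderiv ℝ S x v) 0 := by
      have h1 : HasFDerivAt S (fderiv ℝ S x) (x + (0:ℝ) • v) := by simpa using hdiff.hasFDerivAt
      exact h1.comp_hasDerivAt 0 hline
    rw [hasDerivAt_iff_tendsto_slope] at hgd
    have hslope : ∀ᶠ t in nhdsWithin 0 {(0:ℝ)}ᶜ, slope g 0 t ≠ 0 := hgd.eventually_ne hv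
    have hlinecont : ContinuousAt (fun t : ℝ => x + t • v) 0 := by fun_prop
    have hmem : ∀ᶠ t in nhds (0:ℝ), x + t • v ∈ U :=
      hlinecont.eventually_mem (by simpa using hU.mem_nhds hx)
    have huz : ∀ᶠ t in nhdsWithin 0 {(0:ℝ)}ᶜ, u (x + t • v) = 0 := by
      filter_upwards [hslope, hmem.filter_mono nhdsWithin_le_nhds,
        self_mem_nhdsWithin] with t hslt hmemt (htne : t ≠ 0)
      have hgt : g t ≠ 0 := by
        intro hgt0
        apply hslt
        simp only [slope, hgt0, vsub_eq_sub, sub_zero]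
        rw [show g 0 = 0 by simp [hg, hSx]]
        simp
      exact claim _ hmemt hgt
    have hucont : ContinuousAt u x := hu.continuousAt (hU.mem_nhds hx)
    have htend : Tendsto (fun t : ℝ => u (x + t • v)) (nhdsWithin 0 {(0:ℝ)}ᶜ) (nhds (u x)) := by
      have : Tendsto (fun t : ℝ => x + t • v) (nhdsWithin 0 {(0:ℝ)}ᶜ) (nhds x) := by
        have := hlinecont.tendsto
        simp only [zero_smul, add_zero] at this
        exact this.mono_left nhdsWithin_le_nhds
      exact hucont.tendsto.comp this
    have : Tendsto (fun t : ℝ => u (x + t • v)) (nhdsWithin 0 {(0:ℝ)}ᶜ) (nhds 0) :=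
      (tendsto_congr' huz).mpr tendsto_const_nhds
    exact tendsto_nhds_unique htend this
  · intro h x hx
    refine ⟨0, ?_⟩
    simp only [h x hx, zero_mul, Complex.zero_re]
    exact tendsto_const_nhds
end

section
/- For any nonzero p ∈ ℝ³ and any 6×6 matrix M (constitutive matrix), the 6×6 matrix p_ρ L^ρ, where L^ρ = J^ρ · M with J^ρ the block matrix [[0, -A^ρ],[A^ρ, 0]], has a kernel of dimension at least 2; consequently 0 is an eigenvalue of p_ρ L^ρ of algebraic multiplicity at least 2. -/
/-- The antisymmetric matrix `p_ρ A^ρ` representing `v ↦ p × v`. -/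
def crossMat (p : Fin 3 → ℝ) : Matrix (Fin 3) (Fin 3) ℝ :=
  !![0, -p 2, p 1; p 2, 0, -p 0; -p 1, p 0, 0]

/-- The 6×6 antisymmetric block matrix `J(p) = [[0, -p_ρA^ρ],[p_ρA^ρ, 0]]`. -/
def bigJ (p : Fin 3 → ℝ) : Matrix (Fin 3 ⊕ Fin 3) (Fin 3 ⊕ Fin 3) ℝ :=
  Matrix.fromBlocks 0 (-(crossMat p)) (crossMat p) 0

open Matrix Module Polynomial

lemma crossMat_mulVec_self (p : Fin 3 → ℝ) : crossMat p *ᵥ p = 0 := by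
  funext i
  fin_cases i <;>
    simp [crossMat, Matrix.mulVec, dotProduct, Fin.sum_univ_three] <;> ring

lemma finrank_ker_bigJ (p : Fin 3 → ℝ) (hp : p ≠ 0) :
    2 ≤ Module.finrank ℝ (LinearMap.ker (Matrix.toLin' (bigJ p))) := by
  set e1 : (Fin 3 ⊕ Fin 3) → ℝ := Sum.elim p 0 with he1
  set e2 : (Fin 3 ⊕ Fin 3) → ℝ := Sum.elim 0 p with he2
  have h1 : bigJ p *ᵥ e1 = 0 := by
    rw [he1, bigJ, Matrix.fromBlocks_mulVec]
    simp [crossMat_mulVec_self]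
  have h2 : bigJ p *ᵥ e2 = 0 := by
    rw [he2, bigJ, Matrix.fromBlocks_mulVec]
    simp [Matrix.neg_mulVec, crossMat_mulVec_self]
  have hLI : LinearIndependent ℝ ![e1, e2] := by
    rw [LinearIndependent.pair_iff]
    intro s t hst
    constructor
    · by_contra hs
      apply hp
      funext i
      have := congrFun hst (Sum.inl i)
      simp [he1, he2] at this
      rcases this with h | h
      · exact absurd h hs
      · simpa using h
    · by_contra ht
      apply hp
      funext i
      have := congrFun hst (Sum.inr i)
      simp [he1, he2] at this
      rcases this with h | h
      · exact absurd h ht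
      · simpa using h
  have hspan : Submodule.span ℝ (Set.range ![e1, e2]) ≤
      LinearMap.ker (Matrix.toLin' (bigJ p)) := by
    rw [Submodule.span_le]
    rintro x ⟨i, rfl⟩
    fin_cases i <;>
      simp [LinearMap.mem_ker, Matrix.toLin'_apply, h1, h2]
  calc 2 = Module.finrank ℝ (Submodule.span ℝ (Set.range ![e1, e2])) := by
        rw [finrank_span_eq_card hLI]; simp
    _ ≤ _ := Submodule.finrank_mono hspan

lemma finrank_ker_main (p : Fin 3 → ℝ) (hp : p ≠ 0)
    (M : Matrix (Fin 3 ⊕ Fin 3) (Fin 3 ⊕ Fin 3) ℝ) :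
    2 ≤ Module.finrank ℝ (LinearMap.ker (Matrix.toLin' (bigJ p * M))) := by
  have hmvl : ∀ A : Matrix (Fin 3 ⊕ Fin 3) (Fin 3 ⊕ Fin 3) ℝ,
      A.mulVecLin = Matrix.toLin' A := by
    intro A
    exact LinearMap.ext fun v => (Matrix.mulVecLin_apply _ _).trans (Matrix.toLin'_apply _ _).symm
  have hcard : Module.finrank ℝ ((Fin 3 ⊕ Fin 3) → ℝ) = 6 := by
    simp [Module.finrank_pi]
  -- rank-nullity for bigJ
  have hJ := LinearMap.finrank_range_add_finrank_ker (Matrix.toLin' (bigJ p))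
  rw [hcard] at hJ
  have hkJ := finrank_ker_bigJ p hp
  have hrankJ : (bigJ p).rank ≤ 4 := by
    rw [Matrix.rank, hmvl]
    omega
  have hrankJM : (bigJ p * M).rank ≤ 4 :=
    le_trans (Matrix.rank_mul_le_left _ _) hrankJ
  have hJM := LinearMap.finrank_range_add_finrank_ker (Matrix.toLin' (bigJ p * M))
  rw [hcard] at hJM
  rw [Matrix.rank, hmvl] at hrankJM
  omega

theorem stmt_3 (p : Fin 3 → ℝ) (hp : p ≠ 0)
    (M : Matrix (Fin 3 ⊕ Fin 3) (Fin 3 ⊕ Fin 3) ℝ) :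
    2 ≤ Module.finrank ℝ (LinearMap.ker (Matrix.toLin' (bigJ p * M))) ∧
      2 ≤ Polynomial.rootMultiplicity 0 (Matrix.charpoly (bigJ p * M)) := by
  have hker := finrank_ker_main p hp M
  refine ⟨hker, ?_⟩
  set φ : Module.End ℝ ((Fin 3 ⊕ Fin 3) → ℝ) := Matrix.toLin' (bigJ p * M) with hφ
  have hcp : LinearMap.charpoly φ = Matrix.charpoly (bigJ p * M) := by
    rw [← LinearMap.charpoly_toMatrix φ (Pi.basisFun ℝ (Fin 3 ⊕ Fin 3))]
    congr 1
    exact LinearMap.toMatrix'_toLin' _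
  have hle : LinearMap.ker φ ≤ φ.maxGenEigenspace 0 := by
    intro x hx
    rw [Module.End.mem_maxGenEigenspace]
    exact ⟨1, by simpa using hx⟩
  have h2 : 2 ≤ Module.finrank ℝ (φ.maxGenEigenspace 0) :=
    le_trans hker (Submodule.finrank_mono hle)
  rw [LinearMap.finrank_maxGenEigenspace_zero_eq, hcp] at h2
  rwa [Polynomial.rootMultiplicity_eq_natTrailingDegree']
end

section
/- Let M be a real 6×6 matrix, J(p) = [[0,−p_ρA^ρ],[p_ρA^ρ,0]], and Q = [[a·I,b·I],[c·I,d·I]] with ad − bc = 1. Then for all p₀ ∈ ℝ and p ∈ ℝ³: det(p₀·I₆ − J(p)·Qᵀ·M·Q) = det(p₀·I₆ − J(p)·M). That is, the SL(2,ℝ) action M ↦ QᵀMQ leaves the characteristic polynomial invariant. -/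
theorem stmt_8 (M : Matrix (Fin 3 ⊕ Fin 3) (Fin 3 ⊕ Fin 3) ℝ)
    (a b c d : ℝ) (h : a * d - b * c = 1) (p₀ : ℝ) (p : Fin 3 → ℝ) :
    (p₀ • (1 : Matrix (Fin 3 ⊕ Fin 3) (Fin 3 ⊕ Fin 3) ℝ) -
        bigJ p *
          (Matrix.fromBlocks (a • (1 : Matrix (Fin 3) (Fin 3) ℝ)) (b • 1) (c • 1) (d • 1)).transpose *
          M *
          Matrix.fromBlocks (a • (1 : Matrix (Fin 3) (Fin 3) ℝ)) (b • 1) (c • 1) (d • 1)).det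
      = (p₀ • (1 : Matrix (Fin 3 ⊕ Fin 3) (Fin 3 ⊕ Fin 3) ℝ) - bigJ p * M).det := by
  set Q : Matrix (Fin 3 ⊕ Fin 3) (Fin 3 ⊕ Fin 3) ℝ :=
    Matrix.fromBlocks (a • (1 : Matrix (Fin 3) (Fin 3) ℝ)) (b • 1) (c • 1) (d • 1) with hQ
  set Q' : Matrix (Fin 3 ⊕ Fin 3) (Fin 3 ⊕ Fin 3) ℝ :=
    Matrix.fromBlocks (d • (1 : Matrix (Fin 3) (Fin 3) ℝ)) ((-b) • 1) ((-c) • 1) (a • 1) with hQ'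
  clear_value Q Q'
  have hQQ' : Q * Q' = 1 := by
    rw [hQ, hQ', Matrix.fromBlocks_multiply, ← Matrix.fromBlocks_one]
    simp only [Matrix.smul_mul, Matrix.mul_smul, Matrix.one_mul, Matrix.mul_one, smul_smul]
    rw [Matrix.fromBlocks_inj]
    refine ⟨?_, ?_, ?_, ?_⟩ <;> match_scalars <;>
      first | ring1 | linear_combination h | linear_combination (-1 : ℝ) * h
  have hQ'Q : Q' * Q = 1 := by
    rw [hQ, hQ', Matrix.fromBlocks_multiply, ← Matrix.fromBlocks_one]
    simp only [Matrix.smul_mul, Matrix.mul_smul, Matrix.one_mul, Matrix.mul_one, smul_smul]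
    rw [Matrix.fromBlocks_inj]
    refine ⟨?_, ?_, ?_, ?_⟩ <;> match_scalars <;>
      first | ring1 | linear_combination h | linear_combination (-1 : ℝ) * h
  have hJ : Q * bigJ p * Q.transpose = bigJ p := by
    rw [hQ, bigJ, Matrix.fromBlocks_transpose, Matrix.fromBlocks_multiply,
      Matrix.fromBlocks_multiply]
    simp only [Matrix.transpose_smul, Matrix.transpose_one, Matrix.smul_mul, Matrix.mul_smul,
      Matrix.mul_zero, Matrix.zero_mul, Matrix.mul_one, Matrix.one_mul, Matrix.mul_neg,
      Matrix.neg_mul, smul_neg, smul_smul, add_zero, zero_add, smul_zero]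
    rw [Matrix.fromBlocks_inj]
    refine ⟨?_, ?_, ?_, ?_⟩ <;> match_scalars <;>
      first | ring1 | linear_combination h | linear_combination (-1 : ℝ) * h
  have key : Q * (p₀ • (1 : Matrix (Fin 3 ⊕ Fin 3) (Fin 3 ⊕ Fin 3) ℝ) -
      bigJ p * Q.transpose * M * Q) * Q' = p₀ • 1 - bigJ p * M := by
    rw [Matrix.mul_sub, Matrix.sub_mul, Matrix.mul_smul, Matrix.mul_one, Matrix.smul_mul, hQQ']
    congr 1
    calc Q * (bigJ p * Q.transpose * M * Q) * Q'
        = (Q * bigJ p * Q.transpose) * M * (Q * Q') := by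
          simp only [Matrix.mul_assoc]
      _ = bigJ p * M := by rw [hJ, hQQ', Matrix.mul_one]
  have hdet : Q.det * Q'.det = 1 := by rw [← Matrix.det_mul, hQQ', Matrix.det_one]
  rw [← key, Matrix.det_mul, Matrix.det_mul, mul_comm Q.det, mul_assoc _ Q.det Q'.det, hdet, mul_one]
end

section
/- For n×n matrices A, B, C, D over a commutative ring with CD = DC, the determinant of the 2n×2n block matrix [[A,B],[C,D]] equals det(AD − BC). -/
open Matrix Polynomial

lemma aux_det_mul {R : Type*} [CommRing R] {n : ℕ}
    (A B C D : Matrix (Fin n) (Fin n) R) (h : C * D = D * C) :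
    (Matrix.fromBlocks A B C D).det * D.det = (A * D - B * C).det * D.det := by
  have key : (Matrix.fromBlocks A B C D) * (Matrix.fromBlocks D 0 (-C) 1) =
      Matrix.fromBlocks (A * D - B * C) B 0 D := by
    rw [Matrix.fromBlocks_multiply]
    congr 1 <;> simp [Matrix.mul_neg, sub_eq_add_neg]
    · rw [← h]; simp [Matrix.mul_neg]
  have := congrArg Matrix.det key
  rwa [Matrix.det_mul, Matrix.det_fromBlocks_zero₁₂, Matrix.det_fromBlocks_zero₂₁,
    Matrix.det_one, mul_one] at this

theorem stmt_9 {R : Type*} [CommRing R] {n : ℕ}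
    (A B C D : Matrix (Fin n) (Fin n) R) (h : C * D = D * C) :
    (Matrix.fromBlocks A B C D).det = (A * D - B * C).det := by
  -- lift to R[X], replacing D with charmatrix (-D) = X•1 + D.map C
  let f : R →+* R[X] := Polynomial.C
  let A' := A.map f
  let B' := B.map f
  let C' := C.map f
  let D' := charmatrix (-D)
  have hD' : D' = Matrix.scalar (Fin n) X + D.map f := by
    ext i j
    simp [D', f, charmatrix, sub_eq_add_neg, Matrix.map_apply]
  have hcomm : C' * D' = D' * C' := by
    rw [hD']
    simp only [Matrix.mul_add, Matrix.add_mul]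
    congr 1
    · exact (Matrix.scalar_commute X (fun r => Polynomial.commute_X r) C').symm
    · rw [← Matrix.map_mul, ← Matrix.map_mul, h]
  have hmonic : (D'.det).Monic := Matrix.charpoly_monic (-D)
  have key := aux_det_mul A' B' C' D' hcomm
  have key2 : (Matrix.fromBlocks A' B' C' D').det = (A' * D' - B' * C').det :=
    hmonic.isRegular.right key
  -- evaluate at X = 0
  have := congrArg (Polynomial.eval 0) key2
  rw [← Polynomial.coe_evalRingHom, RingHom.map_det, RingHom.map_det, RingHom.mapMatrix_apply, RingHom.mapMatrix_apply] at this
  have hev : ∀ M : Matrix (Fin n) (Fin n) R,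
      (M.map ⇑f).map ⇑(Polynomial.evalRingHom (0 : R)) = M := by
    intro M; ext i j; simp [f]
  have hevD : D'.map ⇑(Polynomial.evalRingHom (0 : R)) = D := by
    ext i j
    rcases eq_or_ne i j with rfl | hij
    · simp [D', charmatrix_apply_eq]
    · simp [D', charmatrix_apply_ne _ _ _ hij]
  have e1 : (Matrix.fromBlocks A' B' C' D').map ⇑(Polynomial.evalRingHom (0:R)) =
      Matrix.fromBlocks A B C D := by
    rw [Matrix.fromBlocks_map, hev A, hev B, hev C, hevD]
  have e2 : (A' * D' - B' * C').map ⇑(Polynomial.evalRingHom (0:R)) = A * D - B * C := by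
    rw [Matrix.map_sub _ (map_sub _), Matrix.map_mul, Matrix.map_mul, hev A, hev B, hev C, hevD]
  rwa [e1, e2] at this
end

section
/- Let M be a real 6×6 matrix and define L^ρ = [[0,−A^ρ],[A^ρ,0]]·M. The family {p_ρL^ρ : p ∈ ℝ³} is simultaneously symmetrizable by a fixed invertible 6×6 matrix S (i.e. S⁻¹·(p_ρL^ρ)·S is symmetric for all p) if and only if M is the zero matrix, M is positive definite (as a bilinear form, i.e. the symmetric matrix), or M is negative definite. (Equivalently: such S exists iff M = c·(SSᵀ)⁻¹ for some c ∈ ℝ and invertible S.) -/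
open Matrix

lemma crossSub (X Y : Matrix (Fin 3) (Fin 3) ℝ)
    (h : ∀ p, crossMat p * X = Y * crossMat p) :
    X = X 0 0 • (1 : Matrix (Fin 3) (Fin 3) ℝ) ∧ Y = X 0 0 • 1 := by
  have E : ∀ (p : Fin 3 → ℝ) i j, (crossMat p * X) i j = (Y * crossMat p) i j := by
    intro p i j; rw [h p]
  have t1 := E ![1,0,0] 0 1
  have t2 := E ![1,0,0] 0 2
  have t3 := E ![1,0,0] 1 0
  have t4 := E ![1,0,0] 1 1
  have t5 := E ![1,0,0] 1 2
  have t6 := E ![1,0,0] 2 0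
  have t7 := E ![1,0,0] 2 1
  have t8 := E ![1,0,0] 2 2
  have u1 := E ![0,1,0] 0 0
  have u2 := E ![0,1,0] 0 1
  have u3 := E ![0,1,0] 0 2
  have u4 := E ![0,1,0] 1 0
  have u5 := E ![0,1,0] 1 2
  have u6 := E ![0,1,0] 2 0
  have u7 := E ![0,1,0] 2 1
  have u8 := E ![0,1,0] 2 2
  have v1 := E ![0,0,1] 0 0
  have v2 := E ![0,0,1] 0 1
  have v3 := E ![0,0,1] 0 2
  have v4 := E ![0,0,1] 1 0
  have v5 := E ![0,0,1] 1 1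
  have v6 := E ![0,0,1] 1 2
  have v7 := E ![0,0,1] 2 0
  have v8 := E ![0,0,1] 2 1
  simp [crossMat, Matrix.mul_apply, Fin.sum_univ_succ] at t1 t2 t3 t4 t5 t6 t7 t8 u1 u2 u3 u4 u5 u6 u7 u8 v1 v2 v3 v4 v5 v6 v7 v8
  constructor <;> ext i j <;> fin_cases i <;> fin_cases j <;>
    simp [Matrix.one_apply] <;>
    linarith [t1,t2,t3,t4,t5,t6,t7,t8,u1,u2,u3,u4,u5,u6,u7,u8,v1,v2,v3,v4,v5,v6,v7,v8]

lemma bigKey (N : Matrix (Fin 3 ⊕ Fin 3) (Fin 3 ⊕ Fin 3) ℝ)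
    (h : ∀ p, bigJ p * N = Nᵀ * bigJ p) :
    ∃ c : ℝ, N = c • 1 := by
  set A := N.toBlocks₁₁ with hA
  set B := N.toBlocks₁₂ with hB
  set C := N.toBlocks₂₁ with hC
  set D := N.toBlocks₂₂ with hD
  have hN : N = fromBlocks A B C D := (fromBlocks_toBlocks N).symm
  have h' : ∀ p : Fin 3 → ℝ,
      fromBlocks (-(crossMat p * C)) (-(crossMat p * D)) (crossMat p * A) (crossMat p * B)
      = fromBlocks (Cᵀ * crossMat p) (-(Aᵀ * crossMat p)) (Dᵀ * crossMat p)
          (-(Bᵀ * crossMat p)) := by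
    intro p
    have := h p
    rw [hN] at this
    simpa [bigJ, fromBlocks_multiply, fromBlocks_transpose, neg_mul, mul_neg] using this
  have e11 : ∀ p, crossMat p * (-C) = Cᵀ * crossMat p := by
    intro p
    have := ((fromBlocks_inj.mp (h' p))).1
    rw [mul_neg]; rw [this]
  have e12 : ∀ p, crossMat p * D = Aᵀ * crossMat p := by
    intro p
    have := ((fromBlocks_inj.mp (h' p))).2.1
    exact neg_injective this
  have e22 : ∀ p, crossMat p * B = (-Bᵀ) * crossMat p := by
    intro p
    have := ((fromBlocks_inj.mp (h' p))).2.2.2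
    rw [neg_mul]; rw [this]
  obtain ⟨hC1, hC2⟩ := crossSub (-C) Cᵀ e11
  obtain ⟨hD1, hA1⟩ := crossSub D Aᵀ e12
  obtain ⟨hB1, hB2⟩ := crossSub B (-Bᵀ) e22
  simp only [Matrix.neg_apply] at hC1 hC2 hB2
  have hCzero : C = 0 := by
    have h1 : C = C 0 0 • 1 := by
      have := congrArg Neg.neg hC1; simpa [neg_smul] using this
    have h2 : C = (-(C 0 0)) • 1 := by
      have := congrArg transpose hC2
      simpa [transpose_smul, transpose_one] using this
    have h3 : C 0 0 = 0 := by
      have := congrFun (congrFun (h1.symm.trans h2) 0) 0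
      simp [Matrix.one_apply] at this
      linarith
    rw [h1, h3, zero_smul]
  have hBzero : B = 0 := by
    have h2 : B = (-(B 0 0)) • 1 := by
      have := congrArg Neg.neg (congrArg transpose hB2)
      simpa [transpose_smul, transpose_one, neg_smul] using this
    have h3 : B 0 0 = 0 := by
      have := congrFun (congrFun (hB1.symm.trans h2) 0) 0
      simp [Matrix.one_apply] at this
      linarith
    rw [hB1, h3, zero_smul]
  have hAeq : A = D 0 0 • 1 := by
    have := congrArg transpose hA1
    simpa [transpose_smul, transpose_one] using this
  refine ⟨D 0 0, ?_⟩
  rw [hN, hCzero, hBzero, hAeq, hD1, ← fromBlocks_one, Matrix.fromBlocks_smul]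
  simp

lemma crossMat_skew (p : Fin 3 → ℝ) : (crossMat p)ᵀ = -(crossMat p) := by
  ext i j
  fin_cases i <;> fin_cases j <;> simp [crossMat]

lemma bigJ_symm (p : Fin 3 → ℝ) : (bigJ p)ᵀ = bigJ p := by
  simp [bigJ, fromBlocks_transpose, crossMat_skew]

lemma fromSymmetrizer (M S : Matrix (Fin 3 ⊕ Fin 3) (Fin 3 ⊕ Fin 3) ℝ)
    (hS : IsUnit S) (h : ∀ p, (S⁻¹ * (bigJ p * M) * S).IsSymm) :
    ∃ c : ℝ, M = c • (S * Sᵀ)⁻¹ := by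
  have hdet : IsUnit S.det := (Matrix.isUnit_iff_isUnit_det S).mp hS
  have hdetT : IsUnit Sᵀ.det := by rwa [Matrix.det_transpose]
  have key : ∀ p, bigJ p * (M * (S * Sᵀ)) = (M * (S * Sᵀ))ᵀ * bigJ p := by
    intro p
    have hs := h p
    rw [Matrix.IsSymm] at hs
    have e1 : (S⁻¹ * (bigJ p * M) * S)ᵀ = Sᵀ * (Mᵀ * (bigJ p * Sᵀ⁻¹)) := by
      simp only [Matrix.transpose_mul, Matrix.transpose_nonsing_inv, bigJ_symm,
        Matrix.mul_assoc]
    rw [e1] at hs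
    have hs2 := congrArg (fun Z => S * Z * Sᵀ) hs
    have lhs_eq : S * (Sᵀ * (Mᵀ * (bigJ p * Sᵀ⁻¹))) * Sᵀ = S * Sᵀ * Mᵀ * bigJ p := by
      rw [show S * (Sᵀ * (Mᵀ * (bigJ p * Sᵀ⁻¹))) * Sᵀ
          = (S * Sᵀ * Mᵀ * bigJ p) * Sᵀ⁻¹ * Sᵀ by simp only [Matrix.mul_assoc]]
      rw [Matrix.nonsing_inv_mul_cancel_right _ _ hdetT]
    have rhs_eq : S * (S⁻¹ * (bigJ p * M) * S) * Sᵀ = bigJ p * (M * (S * Sᵀ)) := by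
      rw [show S * (S⁻¹ * (bigJ p * M) * S) * Sᵀ
          = S * (S⁻¹ * (bigJ p * (M * (S * Sᵀ)))) by simp only [Matrix.mul_assoc]]
      rw [Matrix.mul_nonsing_inv_cancel_left _ _ hdet]
    rw [lhs_eq, rhs_eq] at hs2
    rw [← hs2]
    simp only [Matrix.transpose_mul, Matrix.transpose_transpose, Matrix.mul_assoc]
  obtain ⟨c, hc⟩ := bigKey (M * (S * Sᵀ)) key
  refine ⟨c, ?_⟩
  have hdetP : IsUnit (S * Sᵀ).det := by
    rw [Matrix.det_mul]; exact hdet.mul hdetT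
  have := congrArg (fun Z => Z * (S * Sᵀ)⁻¹) hc
  rw [Matrix.mul_nonsing_inv_cancel_right _ _ hdetP] at this
  rw [this, Matrix.smul_mul, Matrix.one_mul]

lemma toSymmetrizer (c : ℝ) (S : Matrix (Fin 3 ⊕ Fin 3) (Fin 3 ⊕ Fin 3) ℝ)
    (hS : IsUnit S) :
    ∀ p, (S⁻¹ * (bigJ p * (c • (S * Sᵀ)⁻¹)) * S).IsSymm := by
  intro p
  have hdet : IsUnit S.det := (Matrix.isUnit_iff_isUnit_det S).mp hS
  have hred : S⁻¹ * (bigJ p * (c • (S * Sᵀ)⁻¹)) * S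
      = c • (S⁻¹ * (bigJ p * Sᵀ⁻¹)) := by
    rw [Matrix.mul_inv_rev]
    rw [show S⁻¹ * (bigJ p * (c • (Sᵀ⁻¹ * S⁻¹))) * S
        = c • (S⁻¹ * (bigJ p * (Sᵀ⁻¹ * (S⁻¹ * S)))) by
      simp only [Matrix.mul_smul, Matrix.smul_mul, Matrix.mul_assoc]]
    rw [Matrix.nonsing_inv_mul _ hdet, Matrix.mul_one]
  rw [hred]
  apply Matrix.IsSymm.smul
  rw [Matrix.IsSymm]
  simp only [Matrix.transpose_mul, Matrix.transpose_nonsing_inv, Matrix.transpose_transpose,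
    bigJ_symm, Matrix.mul_assoc]

lemma posDef_smul {A : Matrix (Fin 3 ⊕ Fin 3) (Fin 3 ⊕ Fin 3) ℝ} (hA : A.PosDef)
    {c : ℝ} (hc : 0 < c) : (c • A).PosDef := by
  refine Matrix.PosDef.of_dotProduct_mulVec_pos ?_ ?_
  · have h1 := hA.1
    rw [Matrix.IsHermitian] at h1 ⊢
    rw [Matrix.conjTranspose_smul, h1]
    simp
  · intro x hx
    have h2 := hA.dotProduct_mulVec_pos hx
    rw [Matrix.smul_mulVec, dotProduct_smul]
    exact mul_pos hc h2

lemma posDef_mul_transpose_self {S : Matrix (Fin 3 ⊕ Fin 3) (Fin 3 ⊕ Fin 3) ℝ}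
    (hS : IsUnit S) : (S * Sᵀ).PosDef := by
  have hdet : IsUnit S.det := (Matrix.isUnit_iff_isUnit_det S).mp hS
  refine Matrix.PosDef.of_dotProduct_mulVec_pos ?_ ?_
  · rw [Matrix.IsHermitian, Matrix.conjTranspose_eq_transpose_of_trivial,
      Matrix.transpose_mul, Matrix.transpose_transpose]
  · intro x hx
    have hST : IsUnit Sᵀ.det := by rwa [Matrix.det_transpose]
    have hSTx : Sᵀ *ᵥ x ≠ 0 := by
      intro hzero
      apply hx
      have := congrArg (fun v => Sᵀ⁻¹ *ᵥ v) hzero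
      simpa [Matrix.mulVec_mulVec, Matrix.nonsing_inv_mul _ hST] using this
    have key : star x ⬝ᵥ (S * Sᵀ) *ᵥ x = (Sᵀ *ᵥ x) ⬝ᵥ (Sᵀ *ᵥ x) := by
      rw [show (star x : (Fin 3 ⊕ Fin 3) → ℝ) = x from funext fun i => star_trivial _]
      rw [← Matrix.mulVec_mulVec, Matrix.dotProduct_mulVec, ← Matrix.mulVec_transpose]
    rw [key]
    have hnn : (0:ℝ) ≤ (Sᵀ *ᵥ x) ⬝ᵥ (Sᵀ *ᵥ x) :=
      Finset.sum_nonneg fun i _ => mul_self_nonneg _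
    rcases lt_or_eq_of_le hnn with h | h
    · exact h
    · exact absurd ((dotProduct_self_eq_zero).mp h.symm) hSTx

lemma posDef_isUnit_det {A : Matrix (Fin 3 ⊕ Fin 3) (Fin 3 ⊕ Fin 3) ℝ}
    (hA : A.PosDef) : IsUnit A.det := by
  rw [← Matrix.isUnit_iff_isUnit_det, ← Matrix.mulVec_injective_iff_isUnit]
  intro x y hxy
  by_contra hne
  have hsub : A *ᵥ (x - y) = 0 := by rw [Matrix.mulVec_sub, hxy, sub_self]
  have hpos := hA.dotProduct_mulVec_pos (sub_ne_zero.mpr hne)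
  rw [hsub] at hpos
  simp at hpos

open scoped MatrixOrder

lemma exists_S {M : Matrix (Fin 3 ⊕ Fin 3) (Fin 3 ⊕ Fin 3) ℝ} (hM : M.PosDef) :
    ∃ S : Matrix (Fin 3 ⊕ Fin 3) (Fin 3 ⊕ Fin 3) ℝ, IsUnit S ∧ (S * Sᵀ)⁻¹ = M := by
  set Q := CFC.sqrt M with hQdef
  have hherm : Qᴴ = Q := (CFC.sqrt_nonneg M).posSemidef.1
  have hT : Qᵀ = Q := by rw [← Matrix.conjTranspose_eq_transpose_of_trivial, hherm]
  have hmul : Q * Q = M := CFC.sqrt_mul_sqrt_self M hM.posSemidef.nonneg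
  have hdetM : IsUnit M.det := posDef_isUnit_det hM
  have hdetQ : IsUnit Q.det := by
    have h1 : Q.det * Q.det = M.det := by rw [← Matrix.det_mul, hmul]
    have h3 : Q.det ≠ 0 := fun h => hdetM.ne_zero (by rw [← h1, h, zero_mul])
    exact h3.isUnit
  refine ⟨Q⁻¹, Matrix.isUnit_nonsing_inv_iff.mpr
    ((Matrix.isUnit_iff_isUnit_det Q).mpr hdetQ), ?_⟩
  have hTi : (Q⁻¹)ᵀ = Q⁻¹ := by rw [Matrix.transpose_nonsing_inv, hT]
  rw [hTi, ← Matrix.mul_inv_rev, hmul, Matrix.nonsing_inv_nonsing_inv _ hdetM]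

theorem stmt_11 (M : Matrix (Fin 3 ⊕ Fin 3) (Fin 3 ⊕ Fin 3) ℝ) :
    ((∃ S : Matrix (Fin 3 ⊕ Fin 3) (Fin 3 ⊕ Fin 3) ℝ, IsUnit S ∧
        ∀ p : Fin 3 → ℝ, (S⁻¹ * (bigJ p * M) * S).IsSymm)
      ↔ (M = 0 ∨ M.PosDef ∨ (-M).PosDef)) ∧
    ((∃ S : Matrix (Fin 3 ⊕ Fin 3) (Fin 3 ⊕ Fin 3) ℝ, IsUnit S ∧
        ∀ p : Fin 3 → ℝ, (S⁻¹ * (bigJ p * M) * S).IsSymm)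
      ↔ (∃ (c : ℝ) (S : Matrix (Fin 3 ⊕ Fin 3) (Fin 3 ⊕ Fin 3) ℝ),
          IsUnit S ∧ M = c • (S * S.transpose)⁻¹)) := by
  have main : (∃ S : Matrix (Fin 3 ⊕ Fin 3) (Fin 3 ⊕ Fin 3) ℝ, IsUnit S ∧
      ∀ p : Fin 3 → ℝ, (S⁻¹ * (bigJ p * M) * S).IsSymm)
      ↔ (∃ (c : ℝ) (S : Matrix (Fin 3 ⊕ Fin 3) (Fin 3 ⊕ Fin 3) ℝ),
          IsUnit S ∧ M = c • (S * Sᵀ)⁻¹) := by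
    constructor
    · rintro ⟨S, hS, h⟩
      obtain ⟨c, hc⟩ := fromSymmetrizer M S hS h
      exact ⟨c, S, hS, hc⟩
    · rintro ⟨c, S, hS, rfl⟩
      exact ⟨S, hS, toSymmetrizer c S hS⟩
  have tri : (∃ (c : ℝ) (S : Matrix (Fin 3 ⊕ Fin 3) (Fin 3 ⊕ Fin 3) ℝ),
      IsUnit S ∧ M = c • (S * Sᵀ)⁻¹) ↔ (M = 0 ∨ M.PosDef ∨ (-M).PosDef) := by
    constructor
    · rintro ⟨c, S, hS, rfl⟩
      have hP : ((S * Sᵀ)⁻¹ : Matrix (Fin 3 ⊕ Fin 3) (Fin 3 ⊕ Fin 3) ℝ).PosDef := by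
        have hTunit : IsUnit (Sᵀ⁻¹) := Matrix.isUnit_nonsing_inv_iff.mpr (by
          rw [Matrix.isUnit_iff_isUnit_det, Matrix.det_transpose,
            ← Matrix.isUnit_iff_isUnit_det]; exact hS)
        have heq : (S * Sᵀ)⁻¹ = Sᵀ⁻¹ * (Sᵀ⁻¹)ᵀ := by
          rw [Matrix.mul_inv_rev, Matrix.transpose_nonsing_inv, Matrix.transpose_transpose]
        rw [heq]
        exact posDef_mul_transpose_self hTunit
      rcases lt_trichotomy c 0 with hc | hc | hc
      · right; right
        rw [← neg_smul]
        exact posDef_smul hP (by linarith)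
      · left; rw [hc, zero_smul]
      · right; left; exact posDef_smul hP hc
    · rintro (rfl | hM | hM)
      · exact ⟨0, 1, isUnit_one, by simp⟩
      · obtain ⟨S, hS, hinv⟩ := exists_S hM
        exact ⟨1, S, hS, by rw [one_smul, hinv]⟩
      · obtain ⟨S, hS, hinv⟩ := exists_S hM
        refine ⟨-1, S, hS, ?_⟩
        rw [neg_smul, one_smul, hinv, neg_neg]
  exact ⟨main.trans tri, main⟩
end

section
/- If invertible real matrices S and M satisfy M·S·Sᵀ = [[b·I, d·I],[a·I, c·I]] (block form with 3×3 blocks) and S·Sᵀ·Mᵀ = [[c·I, −a·I],[−d·I, b·I]] for real numbers a,b,c,d, then a = d = 0 and b = c, so that M = b·(SSᵀ)⁻¹. -/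
theorem stmt_12 (S M : Matrix (Fin 3 ⊕ Fin 3) (Fin 3 ⊕ Fin 3) ℝ)
    (hS : IsUnit S) (hM : IsUnit M) (a b c d : ℝ)
    (h1 : M * S * S.transpose =
      Matrix.fromBlocks (b • (1 : Matrix (Fin 3) (Fin 3) ℝ)) (d • 1) (a • 1) (c • 1))
    (h2 : S * S.transpose * M.transpose =
      Matrix.fromBlocks (c • (1 : Matrix (Fin 3) (Fin 3) ℝ)) ((-a) • 1) ((-d) • 1) (b • 1)) :
    a = 0 ∧ d = 0 ∧ b = c ∧ M = b • (S * S.transpose)⁻¹ := by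
  have ht : M * S * S.transpose =
      Matrix.fromBlocks (c • (1 : Matrix (Fin 3) (Fin 3) ℝ)) ((-d) • 1) ((-a) • 1) (b • 1) := by
    have := congrArg Matrix.transpose h2
    simpa [Matrix.transpose_mul, Matrix.fromBlocks_transpose, Matrix.transpose_smul,
      mul_assoc] using this
  have key := h1.symm.trans ht
  have ha : a = 0 := by
    have := congrFun (congrFun key (Sum.inr 0)) (Sum.inl 0)
    simp [Matrix.fromBlocks, Matrix.one_apply] at this
    linarith
  have hd : d = 0 := by
    have := congrFun (congrFun key (Sum.inl 0)) (Sum.inr 0)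
    simp [Matrix.fromBlocks, Matrix.one_apply] at this
    linarith
  have hbc : b = c := by
    have := congrFun (congrFun key (Sum.inl 0)) (Sum.inl 0)
    simpa [Matrix.fromBlocks, Matrix.one_apply] using this
  refine ⟨ha, hd, hbc, ?_⟩
  subst ha hd hbc
  have hb : M * (S * S.transpose) = b • 1 := by
    rw [← mul_assoc, h1]
    ext (i|i) (j|j) <;>
      simp [Matrix.fromBlocks, Matrix.one_apply, Matrix.smul_apply]
  have hdet : IsUnit (S * S.transpose).det := by
    simpa [Matrix.det_mul, Matrix.det_transpose] using
      (hS.map (Matrix.detMonoidHom)).mul (hS.map (Matrix.detMonoidHom))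
  have hInv := Matrix.mul_nonsing_inv _ hdet
  have h3 : M * (S * S.transpose) * (S * S.transpose)⁻¹
      = b • 1 * (S * S.transpose)⁻¹ := congrArg (· * (S * S.transpose)⁻¹) hb
  rwa [mul_assoc, hInv, mul_one, Matrix.smul_mul, one_mul] at h3
end

section
/- For a biisotropic constitutive matrix M = [[κI, χI],[γI, νI]] with scalars κ,ν,χ,γ and κ ≠ 0, the characteristic polynomial satisfies det(p₀·I₆ − J(p)·M) = p₀² · ( (p₀² − |p|²(κν − χγ))² + p₀²|p|²(χ−γ)² ). -/
set_option maxHeartbeats 1000000 in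
theorem stmt_14 (κ χ γ ν : ℝ) (hκ : κ ≠ 0) (p₀ : ℝ) (p : Fin 3 → ℝ) :
    (p₀ • (1 : Matrix (Fin 3 ⊕ Fin 3) (Fin 3 ⊕ Fin 3) ℝ) -
        bigJ p * Matrix.fromBlocks (κ • (1 : Matrix (Fin 3) (Fin 3) ℝ)) (χ • 1) (γ • 1) (ν • 1)).det
      = p₀ ^ 2 *
        ((p₀ ^ 2 - (∑ i, p i ^ 2) * (κ * ν - χ * γ)) ^ 2 +
          p₀ ^ 2 * (∑ i, p i ^ 2) * (χ - γ) ^ 2) := by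
  set Cm := crossMat p with hCm
  have hF : p₀ • (1 : Matrix (Fin 3 ⊕ Fin 3) (Fin 3 ⊕ Fin 3) ℝ) -
      bigJ p * Matrix.fromBlocks (κ • (1 : Matrix (Fin 3) (Fin 3) ℝ)) (χ • 1) (γ • 1) (ν • 1) =
      Matrix.fromBlocks (p₀ • 1 + γ • Cm) (ν • Cm) (-(κ • Cm)) (p₀ • 1 - χ • Cm) := by
    rw [bigJ, Matrix.fromBlocks_multiply, ← Matrix.fromBlocks_one, Matrix.fromBlocks_smul]
    ext (i | i) (j | j) <;>
      simp [Matrix.fromBlocks, Matrix.mul_smul, sub_eq_add_neg, add_comm, hCm] <;> ring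
  have hCp : Cm.mulVec p = 0 := by
    funext i
    fin_cases i <;>
      simp [hCm, crossMat, Matrix.mulVec, dotProduct, Fin.sum_univ_three, Matrix.vecHead, Matrix.vecTail] <;> ring
  rcases eq_or_ne p₀ 0 with h0 | h0
  · subst h0
    rcases eq_or_ne p 0 with hp | hp
    · have hCm0 : Cm = 0 := by
        funext i j
        fin_cases i <;> fin_cases j <;> simp [hCm, crossMat, hp, Matrix.vecHead, Matrix.vecTail]
      rw [hF, hCm0]
      simp
    · have hv : (Matrix.fromBlocks ((0:ℝ) • 1 + γ • Cm) (ν • Cm) (-(κ • Cm))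
          ((0:ℝ) • 1 - χ • Cm)).mulVec (Sum.elim p 0) = 0 := by
        rw [Matrix.fromBlocks_mulVec]
        simp [Matrix.add_mulVec, Matrix.sub_mulVec, Matrix.smul_mulVec,
          Matrix.neg_mulVec, hCp]
      have hdet : (Matrix.fromBlocks ((0:ℝ) • 1 + γ • Cm) (ν • Cm) (-(κ • Cm))
          ((0:ℝ) • 1 - χ • Cm)).det = 0 := by
        by_contra hd
        have := Matrix.eq_zero_of_mulVec_eq_zero hd hv
        exact hp (funext fun i => congrFun this (Sum.inl i))
      rw [hF, hdet]
      ring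
  · set D : Matrix (Fin 3) (Fin 3) ℝ := p₀ • 1 - χ • Cm with hD
    have hq0 : (0:ℝ) ≤ ∑ i, p i ^ 2 := Finset.sum_nonneg fun i _ => sq_nonneg _
    have hdetD : D.det = p₀ * (p₀ ^ 2 + χ ^ 2 * ∑ i, p i ^ 2) := by
      simp [hD, hCm, crossMat, Matrix.det_fin_three, Fin.sum_univ_three]
      ring
    have hDne : D.det ≠ 0 := by
      rw [hdetD]
      have h1 : (0:ℝ) < p₀ ^ 2 + χ ^ 2 * ∑ i, p i ^ 2 := by positivity
      exact mul_ne_zero h0 h1.ne'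
    haveI : Invertible D := D.invertibleOfIsUnitDet (isUnit_iff_ne_zero.mpr hDne)
    have hcomm : Commute (-(κ • Cm)) D := by
      show _ * _ = _ * _
      rw [hD]
      simp [Matrix.mul_sub, Matrix.sub_mul, Matrix.mul_smul, Matrix.smul_mul, smul_smul,
        mul_comm]
    have hinv : ⅟D * (-(κ • Cm)) = (-(κ • Cm)) * ⅟D := (hcomm.invOf_right).symm.eq
    rw [hF, Matrix.det_fromBlocks₂₂]
    have key : ((p₀ • 1 + γ • Cm) - ν • Cm * ⅟D * (-(κ • Cm))) * D
        = (p₀ • 1 + γ • Cm) * D - (ν • Cm) * (-(κ • Cm)) := by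
      rw [Matrix.sub_mul]
      congr 1
      calc ν • Cm * ⅟D * (-(κ • Cm)) * D = ν • Cm * (⅟D * (-(κ • Cm)) * D) := by
            simp only [Matrix.mul_assoc]
        _ = ν • Cm * ((-(κ • Cm)) * (⅟D * D)) := by rw [hinv, Matrix.mul_assoc]
        _ = (ν • Cm) * (-(κ • Cm)) := by rw [invOf_mul_self, Matrix.mul_one]
    have hdetE : Matrix.det ((p₀ • 1 + γ • Cm) - ν • Cm * ⅟D * (-(κ • Cm))) * D.det
        = Matrix.det ((p₀ • 1 + γ • Cm) * D - (ν • Cm) * (-(κ • Cm))) := by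
      rw [← Matrix.det_mul, key]
    rw [mul_comm, hdetE]
    have hE : (p₀ • 1 + γ • Cm) * D - (ν • Cm) * (-(κ • Cm)) =
        !![p₀^2 - (κ*ν-γ*χ)*((p 1)^2+(p 2)^2), -(p₀*(γ-χ))*p 2 + (κ*ν-γ*χ)*p 0*p 1,
             (p₀*(γ-χ))*p 1 + (κ*ν-γ*χ)*p 0*p 2;
           (p₀*(γ-χ))*p 2 + (κ*ν-γ*χ)*p 0*p 1, p₀^2 - (κ*ν-γ*χ)*((p 0)^2+(p 2)^2),
             -(p₀*(γ-χ))*p 0 + (κ*ν-γ*χ)*p 1*p 2;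
           -(p₀*(γ-χ))*p 1 + (κ*ν-γ*χ)*p 0*p 2, (p₀*(γ-χ))*p 0 + (κ*ν-γ*χ)*p 1*p 2,
             p₀^2 - (κ*ν-γ*χ)*((p 0)^2+(p 1)^2)] := by
      ext i j
      fin_cases i <;> fin_cases j <;>
        simp [hD, hCm, crossMat, Matrix.mul_apply, Fin.sum_univ_three, Matrix.one_apply] <;>
          ring
    rw [hE, Matrix.det_fin_three]
    simp [Fin.sum_univ_three]
    ring
end

section
/- For a biisotropic constitutive matrix M = [[κI,χI],[γI,νI]], all roots p₀ of the characteristic polynomial p₀²·((p₀² − |p|²(κν−χγ))² + p₀²|p|²(χ−γ)²) are real for every p ∈ ℝ³ if and only if χ = γ and κν − χγ ≥ 0. -/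
theorem stmt_15 (κ χ γ ν : ℝ) :
    (∀ p : Fin 3 → ℝ, ∀ z : ℂ,
        z ^ 2 * ((z ^ 2 - ((∑ i, p i ^ 2 : ℝ) : ℂ) * ((κ * ν - χ * γ : ℝ) : ℂ)) ^ 2 +
            z ^ 2 * ((∑ i, p i ^ 2 : ℝ) : ℂ) * (((χ - γ : ℝ)) : ℂ) ^ 2) = 0 →
          z.im = 0)
      ↔ (χ = γ ∧ κ * ν - χ * γ ≥ 0) := by
  constructor
  · intro h
    have hs1 : ((∑ i, (![1,0,0] : Fin 3 → ℝ) i ^ 2 : ℝ) : ℂ) = 1 := by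
      norm_num [Fin.sum_univ_three]
      rfl
    set D : ℝ := κ * ν - χ * γ with hDdef
    set c : ℝ := χ - γ with hcdef
    have hχγ : χ = γ := by
      by_contra hne
      have hc : c ≠ 0 := sub_ne_zero.mpr hne
      obtain ⟨w, hw⟩ := IsAlgClosed.exists_pow_nat_eq ((-c^2 + 4*D : ℝ) : ℂ) (n := 2) (by norm_num)
      set z₁ : ℂ := (Complex.I * c + w) / 2 with hz₁
      set z₂ : ℂ := (Complex.I * c - w) / 2 with hz₂
      have key : ∀ z : ℂ, z ^ 2 - Complex.I * c * z - D = 0 →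
          z ^ 2 * ((z ^ 2 - ((∑ i, (![1,0,0] : Fin 3 → ℝ) i ^ 2 : ℝ) : ℂ) * (D : ℂ)) ^ 2 +
            z ^ 2 * ((∑ i, (![1,0,0] : Fin 3 → ℝ) i ^ 2 : ℝ) : ℂ) * ((c : ℝ) : ℂ) ^ 2) = 0 := by
        intro z hz
        rw [hs1]
        have hIsq : (Complex.I) ^ 2 = -1 := Complex.I_sq
        linear_combination (z^2 * (z^2 - (D:ℂ) + Complex.I*c*z) + z^4*c^2*Complex.I^2 + z^4*c^2) * hz + (z^4*c^2 + z^4*(D:ℂ)*(c:ℂ)^2 + z^5*(c:ℂ)^3*Complex.I - z^6*(c:ℂ)^2)*hIsq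
      have e₁ : z₁ ^ 2 - Complex.I * c * z₁ - D = 0 := by
        rw [hz₁]
        have hIsq : (Complex.I) ^ 2 = -1 := Complex.I_sq
        push_cast at hw ⊢
        linear_combination (1/4 : ℂ) * hw - ((c:ℂ)^2/4) * hIsq
      have e₂ : z₂ ^ 2 - Complex.I * c * z₂ - D = 0 := by
        rw [hz₂]
        have hIsq : (Complex.I) ^ 2 = -1 := Complex.I_sq
        push_cast at hw ⊢
        linear_combination (1/4 : ℂ) * hw - ((c:ℂ)^2/4) * hIsq
      have i₁ : z₁.im = 0 := h ![1,0,0] z₁ (key z₁ e₁)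
      have i₂ : z₂.im = 0 := h ![1,0,0] z₂ (key z₂ e₂)
      have hsum : z₁.im + z₂.im = c := by
        have h' : z₁ + z₂ = Complex.I * c := by rw [hz₁, hz₂]; ring
        have := congrArg Complex.im h'
        simpa using this
      rw [i₁, i₂] at hsum
      exact hc (by linarith)
    refine ⟨hχγ, ?_⟩
    by_contra hD
    push_neg at hD
    set z : ℂ := Complex.I * (Real.sqrt (-D) : ℝ) with hzdef
    have hz2 : z ^ 2 = (D : ℂ) := by
      rw [hzdef]
      have : (Real.sqrt (-D) : ℝ) ^ 2 = -D := Real.sq_sqrt (by linarith)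
      have h2 : ((Real.sqrt (-D) : ℝ) : ℂ) ^ 2 = ((-D : ℝ) : ℂ) := by
        exact_mod_cast congrArg (fun x : ℝ => (x : ℂ)) this
      push_cast at h2 ⊢
      rw [mul_pow, Complex.I_sq, h2]
      ring
    have hc0 : ((c : ℝ) : ℂ) = 0 := by
      simp [hcdef, hχγ]
    have hpoly : z ^ 2 * ((z ^ 2 - ((∑ i, (![1,0,0] : Fin 3 → ℝ) i ^ 2 : ℝ) : ℂ) * (D : ℂ)) ^ 2 +
        z ^ 2 * ((∑ i, (![1,0,0] : Fin 3 → ℝ) i ^ 2 : ℝ) : ℂ) * ((c : ℝ) : ℂ) ^ 2) = 0 := by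
      rw [hs1, hz2, hc0]
      ring
    have him : z.im = 0 := h ![1,0,0] z hpoly
    have : z.im = Real.sqrt (-D) := by
      rw [hzdef]; simp
    rw [this] at him
    have : (0:ℝ) < Real.sqrt (-D) := Real.sqrt_pos.mpr (by linarith)
    linarith
  · rintro ⟨hχγ, hD⟩ p z hz
    have hc0 : ((χ - γ : ℝ) : ℂ) = 0 := by simp [hχγ]
    rw [hc0] at hz
    set s : ℝ := ∑ i, p i ^ 2 with hsdef
    have hs0 : 0 ≤ s := Finset.sum_nonneg fun i _ => sq_nonneg _
    have hr0 : 0 ≤ s * (κ * ν - χ * γ) := mul_nonneg hs0 hD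
    have hz' : z ^ 2 * (z ^ 2 - ((s : ℝ) : ℂ) * ((κ * ν - χ * γ : ℝ) : ℂ)) ^ 2 = 0 := by
      linear_combination hz
    rcases mul_eq_zero.mp hz' with h1 | h2
    · have : z = 0 := by
        exact pow_eq_zero_iff (n := 2) (by norm_num) |>.mp h1
      simp [this]
    · have hz2 : z ^ 2 = ((s * (κ * ν - χ * γ) : ℝ) : ℂ) := by
        have h3 := pow_eq_zero_iff (n := 2) (M₀ := ℂ) (by norm_num) |>.mp h2
        push_cast at h3 ⊢
        linear_combination h3
      set r : ℝ := s * (κ * ν - χ * γ) with hrdef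
      have hsq : ((Real.sqrt r : ℝ) : ℂ) ^ 2 = (r : ℂ) := by
        exact_mod_cast congrArg (fun x : ℝ => (x : ℂ)) (Real.sq_sqrt hr0)
      have hfact : (z - (Real.sqrt r : ℝ)) * (z + (Real.sqrt r : ℝ)) = 0 := by
        linear_combination hz2 - hsq
      rcases mul_eq_zero.mp hfact with h | h
      · have : z = ((Real.sqrt r : ℝ) : ℂ) := by linear_combination h
        simp [this]
      · have : z = -((Real.sqrt r : ℝ) : ℂ) := by linear_combination h
        simp [this]
end
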